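/- Let α > 1 and define b: ℝ → ℝ by b(x) = x · log(1/x) · (log log(1/x) − 1)^α for 0 < x < e^{−e} and b(x) = 0 otherwise. Then b is continuous, and the Cauchy problem γ'(t) = b(γ(t)), γ(0) = 0 has at least two distinct solutions on [0,∞): the constant solution γ₁ ≡ 0, and the function γ₂ defined by γ₂(0) = 0 and γ₂(t) = exp( −exp( 1 + ((α−1)t)^{−1/(α−1)} ) ) for t > 0, which is differentiable on [0,∞), takes values in [0, e^{−e}), is strictly positive for t > 0, and satisfies γ₂'(t) = b(γ₂(t)) for all t ≥ 0. -/

import Mathlib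

open Real Set Filter Topology

noncomputable def bf (α : ℝ) (x : ℝ) : ℝ :=
  if x ∈ Set.Ioo (0:ℝ) (Real.exp (-Real.exp 1)) then
    x * Real.log (1 / x) * (Real.log (Real.log (1 / x)) - 1) ^ α else 0

lemma bf_of_mem {α x : ℝ} (h : x ∈ Set.Ioo (0:ℝ) (Real.exp (-Real.exp 1))) :
    bf α x = x * Real.log (1 / x) * (Real.log (Real.log (1 / x)) - 1) ^ α := if_pos h

lemma bf_of_not_mem {α x : ℝ} (h : x ∉ Set.Ioo (0:ℝ) (Real.exp (-Real.exp 1))) :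
    bf α x = 0 := if_neg h

lemma mem_facts {x : ℝ} (hx : x ∈ Set.Ioo (0:ℝ) (Real.exp (-Real.exp 1))) :
    Real.exp 1 < Real.log (1/x) ∧ 1 < Real.log (Real.log (1/x)) := by
  have h1 : Real.log x < -Real.exp 1 := by
    calc Real.log x < Real.log (Real.exp (-Real.exp 1)) := Real.log_lt_log hx.1 hx.2
    _ = -Real.exp 1 := Real.log_exp _
  have h2 : Real.exp 1 < Real.log (1/x) := by
    rw [one_div, Real.log_inv]; linarith
  refine ⟨h2, ?_⟩
  calc (1:ℝ) = Real.log (Real.exp 1) := (Real.log_exp 1).symm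
  _ < Real.log (Real.log (1/x)) := Real.log_lt_log (Real.exp_pos 1) h2

lemma bf_nonneg (α : ℝ) (x : ℝ) : 0 ≤ bf α x := by
  by_cases h : x ∈ Set.Ioo (0:ℝ) (Real.exp (-Real.exp 1))
  · rw [bf_of_mem h]
    obtain ⟨h2, h3⟩ := mem_facts h
    have e1 : (0:ℝ) < Real.exp 1 := Real.exp_pos 1
    have h4 : (0:ℝ) ≤ (Real.log (Real.log (1/x)) - 1) ^ α := Real.rpow_nonneg (by linarith) _
    exact mul_nonneg (mul_nonneg h.1.le (by linarith)) h4
  · rw [bf_of_not_mem h]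

lemma bf_le_sqrt {α : ℝ} (hα : 1 < α) (x : ℝ) :
    bf α x ≤ (2*(1+α)) ^ (1+α) * Real.sqrt x := by
  have hα0 : (0:ℝ) < 1 + α := by linarith
  have hC : (0:ℝ) < (2*(1+α)) ^ (1+α) := Real.rpow_pos_of_pos (by linarith) _
  by_cases h : x ∈ Set.Ioo (0:ℝ) (Real.exp (-Real.exp 1))
  · obtain ⟨h2, h3⟩ := mem_facts h
    have hx0 : 0 < x := h.1
    set L := Real.log (1/x) with hL
    have hL0 : 0 < L := lt_trans (Real.exp_pos 1) h2
    have hLlog : Real.log L - 1 ≤ L := by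
      have := Real.log_le_sub_one_of_pos hL0
      linarith
    set ε : ℝ := (2*(1+α))⁻¹ with hε
    have hε0 : 0 < ε := by positivity
    -- step 1 : (log L - 1)^α ≤ L^α
    have s1 : (Real.log L - 1) ^ α ≤ L ^ α :=
      Real.rpow_le_rpow (by linarith) hLlog (by linarith)
    -- step 2 : L ≤ x⁻¹ ^ ε / ε
    have s2 : L ≤ x⁻¹ ^ ε / ε := by
      rw [hL, one_div]
      exact Real.log_le_rpow_div (inv_nonneg.mpr hx0.le) hε0
    -- step 3 : L^(1+α) ≤ (x⁻¹ ^ ε / ε)^(1+α)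
    have s3 : L ^ (1+α) ≤ (x⁻¹ ^ ε / ε) ^ (1+α) :=
      Real.rpow_le_rpow hL0.le s2 hα0.le
    have hxinv : (0:ℝ) ≤ x⁻¹ := inv_nonneg.mpr hx0.le
    have s4 : (x⁻¹ ^ ε / ε) ^ (1+α) = x⁻¹ ^ (ε * (1+α)) * (2*(1+α)) ^ (1+α) := by
      rw [div_eq_mul_inv, Real.mul_rpow (Real.rpow_nonneg hxinv _) (by positivity),
        ← Real.rpow_mul hxinv, hε, inv_inv]
    have hεα : ε * (1+α) = 1/2 := by
      rw [hε]; field_simp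
    have s5 : x⁻¹ ^ (ε * (1+α)) = (Real.sqrt x)⁻¹ := by
      rw [hεα, Real.inv_rpow hx0.le, ← Real.sqrt_eq_rpow]
    have hsx : 0 < Real.sqrt x := Real.sqrt_pos.mpr hx0
    have hxsq : x = Real.sqrt x * Real.sqrt x := (Real.mul_self_sqrt hx0.le).symm
    -- put it together
    rw [bf_of_mem h, ← hL]
    calc x * L * (Real.log L - 1) ^ α ≤ x * L * L ^ α := by
          have : 0 ≤ x * L := mul_nonneg hx0.le hL0.le
          exact mul_le_mul_of_nonneg_left s1 this
      _ = x * L ^ (1+α) := by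
          rw [Real.rpow_add hL0, Real.rpow_one]; ring
      _ ≤ x * ((Real.sqrt x)⁻¹ * (2*(1+α)) ^ (1+α)) := by
          rw [← s5, ← s4]
          exact mul_le_mul_of_nonneg_left s3 hx0.le
      _ = (2*(1+α)) ^ (1+α) * Real.sqrt x := by
          field_simp; rw [sq]; exact hxsq
  · rw [bf_of_not_mem h]
    positivity

lemma bf_cont {α : ℝ} (hα : 1 < α) : Continuous (bf α) := by
  have hα0 : (0:ℝ) < α := by linarith
  have hc0 : 0 < Real.exp (-Real.exp 1) := Real.exp_pos _
  have hc1 : Real.exp (-Real.exp 1) < 1 := by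
    rw [Real.exp_lt_one_iff]
    simpa using Real.exp_pos 1
  set c := Real.exp (-Real.exp 1) with hcdef
  rw [continuous_iff_continuousAt]
  intro x₀
  rcases lt_trichotomy x₀ 0 with h0 | h0 | h0
  · -- x₀ < 0
    refine (continuousAt_const : ContinuousAt (fun _ : ℝ => (0:ℝ)) _).congr ?_
    filter_upwards [Iio_mem_nhds h0] with x hx
    exact (bf_of_not_mem fun hm => absurd hm.1 (not_lt.mpr (le_of_lt hx))).symm
  · -- x₀ = 0 : squeeze
    subst h0
    have hbf0 : bf α 0 = 0 := bf_of_not_mem (fun hm => lt_irrefl 0 hm.1)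
    have : Tendsto (bf α) (𝓝 0) (𝓝 0) := by
      apply squeeze_zero (fun x => bf_nonneg α x) (fun x => bf_le_sqrt hα x)
      have : Tendsto (fun x : ℝ => (2*(1+α)) ^ (1+α) * Real.sqrt x) (𝓝 0) (𝓝 ((2*(1+α)) ^ (1+α) * Real.sqrt 0)) :=
        (continuous_const.mul Real.continuous_sqrt).tendsto 0
      simpa using this
    rw [ContinuousAt, hbf0]
    exact this
  rcases lt_trichotomy x₀ c with h1 | h1 | h1
  · -- interior
    have hmem : x₀ ∈ Set.Ioo (0:ℝ) c := ⟨h0, h1⟩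
    obtain ⟨h2, h3⟩ := mem_facts hmem
    have hx0 : x₀ ≠ 0 := ne_of_gt h0
    have c1 : ContinuousAt (fun x : ℝ => 1 / x) x₀ :=
      ContinuousAt.div continuousAt_const continuousAt_id hx0
    have h1x : (1:ℝ)/x₀ ≠ 0 := by positivity
    have c2 : ContinuousAt (fun x : ℝ => Real.log (1/x)) x₀ := c1.log h1x
    have hLne : Real.log (1/x₀) ≠ 0 := by
      have := Real.exp_pos 1; linarith
    have c3 : ContinuousAt (fun x : ℝ => Real.log (Real.log (1/x))) x₀ := c2.log hLne
    have c4 : ContinuousAt (fun x : ℝ => (Real.log (Real.log (1/x)) - 1) ^ α) x₀ :=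
      (c3.sub continuousAt_const).rpow_const (Or.inl (ne_of_gt (by linarith : (0:ℝ) < Real.log (Real.log (1/x₀)) - 1)))
    have c5 : ContinuousAt
        (fun x : ℝ => x * Real.log (1/x) * (Real.log (Real.log (1/x)) - 1) ^ α) x₀ :=
      (continuousAt_id.mul c2).mul c4
    refine c5.congr ?_
    filter_upwards [isOpen_Ioo.mem_nhds hmem] with x hx
    exact (bf_of_mem hx).symm
  · -- x₀ = c : squeeze
    subst h1
    have hbfc : bf α c = 0 := bf_of_not_mem (fun hm => lt_irrefl c hm.2)
    have he3 : Real.exp 1 < 3 := by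
      have := Real.exp_one_lt_d9; linarith
    -- the majorant
    set g : ℝ → ℝ := fun x => 6 * (max (Real.log (Real.log (1/x)) - 1) 0) ^ α with hg
    have hgc : g c = 0 := by
      have h1c : (1:ℝ)/c = Real.exp (Real.exp 1) := by
        rw [hcdef, one_div, ← Real.exp_neg, neg_neg]
      rw [hg]
      simp only [h1c, Real.log_exp]
      rw [sub_self, max_self, Real.zero_rpow (ne_of_gt hα0), mul_zero]
    have hgcont : ContinuousAt g c := by
      have hcne : (c:ℝ) ≠ 0 := ne_of_gt hc0
      have c1 : ContinuousAt (fun x : ℝ => 1 / x) c :=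
        ContinuousAt.div continuousAt_const continuousAt_id hcne
      have h1c : (1:ℝ)/c = Real.exp (Real.exp 1) := by
        rw [hcdef, one_div, ← Real.exp_neg, neg_neg]
      have h1cne : (1:ℝ)/c ≠ 0 := by positivity
      have c2 : ContinuousAt (fun x : ℝ => Real.log (1/x)) c := c1.log h1cne
      have hLcne : Real.log (1/c) ≠ 0 := by
        rw [h1c, Real.log_exp]; exact ne_of_gt (Real.exp_pos 1)
      have c3 : ContinuousAt (fun x : ℝ => Real.log (Real.log (1/x))) c := c2.log hLcne
      have c4 : ContinuousAt (fun x : ℝ => max (Real.log (Real.log (1/x)) - 1) 0) c :=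
        (c3.sub continuousAt_const).max continuousAt_const
      exact continuousAt_const.mul (c4.rpow_const (Or.inr hα0.le))
    have hsq : Tendsto (bf α) (𝓝 c) (𝓝 0) := by
      apply squeeze_zero' (g := g) (Eventually.of_forall (bf_nonneg α))
      · filter_upwards [Ioi_mem_nhds (show c^2 < c by nlinarith)] with x hx
        by_cases hm : x ∈ Set.Ioo (0:ℝ) c
        · obtain ⟨h2, h3⟩ := mem_facts hm
          rw [bf_of_mem hm]; simp only [hg]
          have hL6 : Real.log (1/x) ≤ 6 := by
            have hxc : c^2 < x := hx
            have : Real.log (c^2) < Real.log x := Real.log_lt_log (by positivity) hxc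
            rw [Real.log_pow, hcdef, Real.log_exp] at this
            rw [one_div, Real.log_inv]
            push_cast at this
            linarith
          have hxle1 : x ≤ 1 := le_of_lt (lt_trans hm.2 hc1)
          have hmax : max (Real.log (Real.log (1/x)) - 1) 0 = Real.log (Real.log (1/x)) - 1 :=
            max_eq_left (by linarith)
          rw [hmax]
          have hrnn : (0:ℝ) ≤ (Real.log (Real.log (1/x)) - 1) ^ α :=
            Real.rpow_nonneg (by linarith) _
          have hxL : x * Real.log (1/x) ≤ 6 := by
            have hLpos : 0 < Real.log (1/x) := lt_trans (Real.exp_pos 1) h2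
            nlinarith [hm.1.le]
          exact mul_le_mul_of_nonneg_right hxL hrnn
        · rw [bf_of_not_mem hm]; simp only [hg]
          positivity
      · have := hgcont.tendsto
        rw [hgc] at this
        exact this
    rw [ContinuousAt, hbfc]
    exact hsq
  · -- x₀ > c
    refine (continuousAt_const : ContinuousAt (fun _ : ℝ => (0:ℝ)) _).congr ?_
    filter_upwards [Ioi_mem_nhds h1] with x hx
    exact (bf_of_not_mem fun hm => absurd hm.2 (not_lt.mpr (le_of_lt hx))).symm

-- the value of γ₂ for t > 0 lies in Ioo 0 c
lemma val_mem {α : ℝ} (hα : 1 < α) {t : ℝ} (ht : 0 < t) :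
    Real.exp (-Real.exp (1 + ((α - 1) * t) ^ (-(1 / (α - 1))))) ∈
      Set.Ioo (0:ℝ) (Real.exp (-Real.exp 1)) := by
  have hA : 0 < α - 1 := by linarith
  have hAt : 0 < (α - 1) * t := mul_pos hA ht
  have hu : 0 < ((α - 1) * t) ^ (-(1 / (α - 1))) := Real.rpow_pos_of_pos hAt _
  refine ⟨Real.exp_pos _, Real.exp_lt_exp.mpr ?_⟩
  have : Real.exp 1 < Real.exp (1 + ((α - 1) * t) ^ (-(1 / (α - 1)))) :=
    Real.exp_lt_exp.mpr (by linarith)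
  linarith

-- derivative at positive time
lemma deriv_pos_time {α : ℝ} (hα : 1 < α) {t : ℝ} (ht : 0 < t)
    (γ₂ : ℝ → ℝ)
    (hγ₂ : ∀ s : ℝ, 0 < s →
      γ₂ s = Real.exp (-Real.exp (1 + ((α - 1) * s) ^ (-(1 / (α - 1)))))) :
    HasDerivAt γ₂ (bf α (γ₂ t)) t := by
  have hA : 0 < α - 1 := by linarith
  set A : ℝ := α - 1 with hAdef
  set p : ℝ := -(1 / A) with hpdef
  have hAt : 0 < A * t := mul_pos hA ht
  set u : ℝ := (A * t) ^ p with hudef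
  have hu : 0 < u := Real.rpow_pos_of_pos hAt _
  -- the chain of derivatives
  have h1 : HasDerivAt (fun s : ℝ => A * s) A t := by
    simpa using (hasDerivAt_id t).const_mul A
  have h2 : HasDerivAt (fun s : ℝ => (A * s) ^ p) (A * p * (A * t) ^ (p - 1)) t := by
    exact h1.rpow_const (p := p) (Or.inl hAt.ne')
  have h3 : HasDerivAt (fun s : ℝ => 1 + (A * s) ^ p) (A * p * (A * t) ^ (p - 1)) t :=
    h2.const_add 1
  have h4 := h3.exp
  have h5 := h4.neg
  have h6 := h5.exp
  -- identify γ₂ with the formula near t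
  have hEq : γ₂ =ᶠ[𝓝 t] fun s : ℝ => Real.exp (-Real.exp (1 + (A * s) ^ p)) := by
    filter_upwards [Ioi_mem_nhds ht] with s hs
    exact hγ₂ s hs
  have h7 := h6.congr_of_eventuallyEq hEq
  -- compute b (γ₂ t)
  have hγt : γ₂ t = Real.exp (-Real.exp (1 + u)) := hγ₂ t ht
  have hmem : γ₂ t ∈ Set.Ioo (0:ℝ) (Real.exp (-Real.exp 1)) := by
    rw [hγt]; exact val_mem hα ht
  have hlog1 : Real.log (1 / γ₂ t) = Real.exp (1 + u) := by
    rw [hγt, one_div, ← Real.exp_neg, neg_neg, Real.log_exp]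
  have hbval : bf α (γ₂ t) = γ₂ t * Real.exp (1 + u) * u ^ α := by
    rw [bf_of_mem hmem, hlog1, Real.log_exp, add_sub_cancel_left]
  -- identify the derivative values
  have hAp : A * p = -1 := by
    rw [hpdef]; field_simp
  have hpow : (A * t) ^ (p - 1) = u ^ α := by
    rw [hudef, ← Real.rpow_mul hAt.le]
    congr 1
    rw [hpdef]; field_simp; ring
  have hval : Real.exp (-Real.exp (1 + (A * t) ^ p)) *
      -(Real.exp (1 + (A * t) ^ p) * (A * p * (A * t) ^ (p - 1)))
      = γ₂ t * Real.exp (1 + u) * u ^ α := by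
    rw [← hudef, ← hγt, hAp, hpow]; ring
  rw [hbval, ← hval]
  exact h7

lemma deriv_zero' {α : ℝ} (hα : 1 < α) (γ₂ : ℝ → ℝ) (hγ₂0 : γ₂ 0 = 0)
    (hγ₂ : ∀ s : ℝ, 0 < s →
      γ₂ s = Real.exp (-Real.exp (1 + ((α - 1) * s) ^ (-(1 / (α - 1)))))) :
    HasDerivWithinAt γ₂ 0 (Set.Ici 0) 0 := by
  have hA : 0 < α - 1 := by linarith
  set A : ℝ := α - 1 with hAdef
  set p : ℝ := -(1 / A) with hpdef
  set n : ℕ := ⌈2 * α⌉₊ with hndef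
  have hn : 2 * α ≤ (n : ℝ) := Nat.le_ceil _
  set K : ℝ := ((Nat.factorial n : ℕ) : ℝ) * A ^ 2 with hKdef
  have hK : 0 < K := by positivity
  rw [hasDerivWithinAt_iff_tendsto_slope, Set.Ici_sdiff_left]
  have key : ∀ t : ℝ, t ∈ Set.Ioo 0 A⁻¹ → γ₂ t ≤ K * t * t := by
    intro t ht
    have ht0 : 0 < t := ht.1
    have hAt : 0 < A * t := by positivity
    have hAt1 : A * t ≤ 1 := by
      have := mul_lt_mul_of_pos_left ht.2 hA
      rw [mul_inv_cancel₀ hA.ne'] at this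
      exact this.le
    set u : ℝ := (A * t) ^ p with hudef
    have hu : 0 < u := Real.rpow_pos_of_pos hAt _
    have step1 : γ₂ t ≤ Real.exp (-u) := by
      rw [hγ₂ t ht0, ← hudef]
      apply Real.exp_le_exp.mpr
      have := Real.add_one_le_exp (1 + u)
      linarith
    have step2 : Real.exp (-u) ≤ ((Nat.factorial n : ℕ) : ℝ) * (u⁻¹) ^ n := by
      rw [Real.exp_neg]
      have h1 : u ^ n / ((Nat.factorial n : ℕ) : ℝ) ≤ Real.exp u := Real.pow_div_factorial_le_exp u hu.le n
      have h2 : (Real.exp u)⁻¹ ≤ (u ^ n / ((Nat.factorial n : ℕ) : ℝ))⁻¹ := by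
        gcongr
      calc (Real.exp u)⁻¹ ≤ (u ^ n / ((Nat.factorial n : ℕ) : ℝ))⁻¹ := h2
        _ = ((Nat.factorial n : ℕ) : ℝ) * (u⁻¹) ^ n := by
            rw [inv_div, div_eq_mul_inv, ← inv_pow]
    have step3 : (u⁻¹) ^ n ≤ (A * t) ^ 2 := by
      have huinv : u⁻¹ = (A * t) ^ (-p) := by
        rw [Real.rpow_neg hAt.le p, hudef]
      have hup : (u⁻¹) ^ n = (A * t) ^ ((-p) * n) := by
        rw [huinv, ← Real.rpow_natCast ((A * t) ^ (-p)) n, ← Real.rpow_mul hAt.le]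
      have hexp : (2:ℝ) ≤ (-p) * n := by
        have hpinv : -p = 1 / A := by rw [hpdef]; ring
        rw [hpinv]
        rw [div_mul_eq_mul_div, le_div_iff₀ hA]
        have : 2 * A ≤ 2 * α := by nlinarith
        calc (2:ℝ) * A ≤ 2 * α := this
          _ ≤ (n:ℝ) := hn
          _ = 1 * (n:ℝ) := (one_mul _).symm
      calc (u⁻¹) ^ n = (A * t) ^ ((-p) * n) := hup
        _ ≤ (A * t) ^ (2:ℝ) := Real.rpow_le_rpow_of_exponent_ge hAt hAt1 hexp
        _ = (A * t) ^ 2 := Real.rpow_two _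
    have : γ₂ t ≤ ((Nat.factorial n : ℕ) : ℝ) * (A * t) ^ 2 := by
      calc γ₂ t ≤ Real.exp (-u) := step1
        _ ≤ ((Nat.factorial n : ℕ) : ℝ) * (u⁻¹) ^ n := step2
        _ ≤ ((Nat.factorial n : ℕ) : ℝ) * (A * t) ^ 2 := by
            exact mul_le_mul_of_nonneg_left step3 (by positivity)
    calc γ₂ t ≤ ((Nat.factorial n : ℕ) : ℝ) * (A * t) ^ 2 := this
      _ = K * t * t := by rw [hKdef]; ring
  apply squeeze_zero' (g := fun t => K * t)
  · filter_upwards [self_mem_nhdsWithin] with t ht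
    have ht0 : (0:ℝ) < t := ht
    rw [slope_def_field, hγ₂0, sub_zero, sub_zero]
    have : 0 < γ₂ t := by rw [hγ₂ t ht0]; exact Real.exp_pos _
    positivity
  · filter_upwards [Ioo_mem_nhdsGT_of_mem (show (0:ℝ) ∈ Set.Ico (0:ℝ) A⁻¹ from ⟨le_refl 0, by positivity⟩)] with t ht
    have ht0 : (0:ℝ) < t := ht.1
    rw [slope_def_field, hγ₂0, sub_zero, sub_zero, div_le_iff₀ ht0]
    exact key t ht
  · have h1 : Tendsto (fun t : ℝ => K * t) (𝓝 0) (𝓝 0) := by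
      have hc : Continuous (fun t : ℝ => K * t) := continuous_const.mul continuous_id
      simpa using hc.tendsto (0:ℝ)
    exact h1.mono_left nhdsWithin_le_nhds


theorem stmt_18 (α : ℝ) (hα : 1 < α) (b γ₂ : ℝ → ℝ)
    (hb : ∀ x : ℝ, b x = if x ∈ Set.Ioo (0:ℝ) (Real.exp (-Real.exp 1)) then
      x * Real.log (1 / x) * (Real.log (Real.log (1 / x)) - 1) ^ α else 0)
    (hγ₂0 : γ₂ 0 = 0)
    (hγ₂ : ∀ t : ℝ, 0 < t →
      γ₂ t = Real.exp (-Real.exp (1 + ((α - 1) * t) ^ (-(1 / (α - 1)))))) :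
    Continuous b ∧
    b 0 = 0 ∧
    (∀ t ∈ Set.Ici (0:ℝ),
      HasDerivWithinAt (fun _ : ℝ => (0:ℝ)) (b 0) (Set.Ici 0) t) ∧
    (∀ t ∈ Set.Ici (0:ℝ), γ₂ t ∈ Set.Ico (0:ℝ) (Real.exp (-Real.exp 1))) ∧
    (∀ t : ℝ, 0 < t → 0 < γ₂ t) ∧
    (∀ t ∈ Set.Ici (0:ℝ), HasDerivWithinAt γ₂ (b (γ₂ t)) (Set.Ici 0) t) := by
  have hbf : b = bf α := funext fun x => (hb x).trans rfl
  subst hbf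
  have hb0 : bf α 0 = 0 := bf_of_not_mem (fun h => lt_irrefl 0 h.1)
  refine ⟨bf_cont hα, hb0, ?_, ?_, ?_, ?_⟩
  · intro t _
    rw [hb0]
    exact hasDerivWithinAt_const t _ 0
  · intro t ht
    rcases eq_or_lt_of_le (Set.mem_Ici.mp ht) with h | h
    · rw [← h, hγ₂0]
      exact ⟨le_refl 0, Real.exp_pos _⟩
    · rw [hγ₂ t h]
      have := val_mem hα h
      exact ⟨this.1.le, this.2⟩
  · intro t ht
    rw [hγ₂ t ht]
    exact Real.exp_pos _
  · intro t ht
    rcases eq_or_lt_of_le (Set.mem_Ici.mp ht) with h | h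
    · rw [← h, hγ₂0, hb0]
      subst h
      exact deriv_zero' hα γ₂ hγ₂0 hγ₂
    · exact (deriv_pos_time hα h γ₂ hγ₂).hasDerivWithinAt
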